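/- The (2n+1)-dimensional Heisenberg Lie algebra H_{2n+1}, generated by e_1,...,e_n, f_1,...,f_n, z with [e_i, f_i] = z, admits a cosymplectic structure if and only if n = 1. -/

import Mathlib

/-- The `(2n+1)`-dimensional Heisenberg Lie algebra: elements `(x, y, s)` stand
for `∑ xᵢ eᵢ + ∑ yᵢ fᵢ + s z`, with the only nonzero brackets `[eᵢ, fᵢ] = z`. -/
def Heis (n : ℕ) : Type := (Fin n → ℝ) × (Fin n → ℝ) × ℝ

instance (n : ℕ) : AddCommGroup (Heis n) :=
  inferInstanceAs (AddCommGroup ((Fin n → ℝ) × (Fin n → ℝ) × ℝ))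

noncomputable instance (n : ℕ) : Module ℝ (Heis n) :=
  inferInstanceAs (Module ℝ ((Fin n → ℝ) × (Fin n → ℝ) × ℝ))

instance (n : ℕ) : Module.Finite ℝ (Heis n) :=
  inferInstanceAs (Module.Finite ℝ ((Fin n → ℝ) × (Fin n → ℝ) × ℝ))

noncomputable instance (n : ℕ) : LieRing (Heis n) where
  bracket x y := (0, 0, ∑ i, (x.1 i * y.2.1 i - y.1 i * x.2.1 i))
  add_lie x y z := by
    refine Prod.ext (zero_add (0 : Fin n → ℝ)).symm
      (Prod.ext (zero_add (0 : Fin n → ℝ)).symm ?_)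
    show (∑ i, ((x + y).1 i * z.2.1 i - z.1 i * (x + y).2.1 i)) =
      (∑ i, (x.1 i * z.2.1 i - z.1 i * x.2.1 i)) +
      (∑ i, (y.1 i * z.2.1 i - z.1 i * y.2.1 i))
    rw [← Finset.sum_add_distrib]
    refine Finset.sum_congr rfl fun i _ => ?_
    show ((x.1 + y.1) i * z.2.1 i - z.1 i * (x.2.1 + y.2.1) i) = _
    simp only [Pi.add_apply]; ring
  lie_add x y z := by
    refine Prod.ext (zero_add (0 : Fin n → ℝ)).symm
      (Prod.ext (zero_add (0 : Fin n → ℝ)).symm ?_)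
    show (∑ i, (x.1 i * (y + z).2.1 i - (y + z).1 i * x.2.1 i)) =
      (∑ i, (x.1 i * y.2.1 i - y.1 i * x.2.1 i)) +
      (∑ i, (x.1 i * z.2.1 i - z.1 i * x.2.1 i))
    rw [← Finset.sum_add_distrib]
    refine Finset.sum_congr rfl fun i _ => ?_
    show (x.1 i * (y.2.1 + z.2.1) i - (y.1 + z.1) i * x.2.1 i) = _
    simp only [Pi.add_apply]; ring
  lie_self x := by
    refine Prod.ext rfl (Prod.ext rfl ?_)
    show (∑ i, (x.1 i * x.2.1 i - x.1 i * x.2.1 i)) = 0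
    simp
  leibniz_lie x y z := by
    refine Prod.ext (zero_add (0 : Fin n → ℝ)).symm
      (Prod.ext (zero_add (0 : Fin n → ℝ)).symm ?_)
    show (∑ i, (x.1 i * (0 : Fin n → ℝ) i - (0 : Fin n → ℝ) i * x.2.1 i)) =
      (∑ i, ((0 : Fin n → ℝ) i * z.2.1 i - z.1 i * (0 : Fin n → ℝ) i)) +
      (∑ i, (y.1 i * (0 : Fin n → ℝ) i - (0 : Fin n → ℝ) i * y.2.1 i))
    simp

noncomputable instance (n : ℕ) : LieAlgebra ℝ (Heis n) where
  lie_smul c x y := by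
    refine Prod.ext (smul_zero c).symm (Prod.ext (smul_zero c).symm ?_)
    show (∑ i, (x.1 i * (c • y).2.1 i - (c • y).1 i * x.2.1 i)) =
      c * (∑ i, (x.1 i * y.2.1 i - y.1 i * x.2.1 i))
    rw [Finset.mul_sum]
    refine Finset.sum_congr rfl fun i _ => ?_
    show (x.1 i * (c • y.2.1) i - (c • y.1) i * x.2.1 i) = _
    simp only [Pi.smul_apply, smul_eq_mul]; ring


lemma heis_bracket {n : ℕ} (x y : Heis n) :
    ⁅x, y⁆ = ((0, 0, ∑ i, (x.1 i * y.2.1 i - y.1 i * x.2.1 i)) : Heis n) := rfl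

/-- e-generator of the Heisenberg algebra -/
def heisE {n : ℕ} (i : Fin n) : Heis n := (Pi.single i 1, 0, 0)
/-- f-generator of the Heisenberg algebra -/
def heisF {n : ℕ} (i : Fin n) : Heis n := (0, Pi.single i 1, 0)
/-- central element of the Heisenberg algebra -/
def heisZ {n : ℕ} : Heis n := (0, 0, 1)

lemma heis_smul_heisZ {n : ℕ} (c : ℝ) : c • (heisZ : Heis n) = ((0, 0, c) : Heis n) := by
  refine Prod.ext ?_ (Prod.ext ?_ ?_)
  · show c • (0 : Fin n → ℝ) = 0; rw [smul_zero]
  · show c • (0 : Fin n → ℝ) = 0; rw [smul_zero]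
  · show c • (1 : ℝ) = c; simp

lemma heis_bracket_ef {n : ℕ} (i : Fin n) : ⁅heisE i, heisF i⁆ = (heisZ : Heis n) := by
  have hs : (∑ k, ((heisE i).1 k * (heisF i).2.1 k - (heisF i).1 k * (heisE i).2.1 k)) = 1 := by
    simp [heisE, heisF, Pi.single_apply]
  rw [heis_bracket, hs]
  rfl

lemma heis_bracket_f {n : ℕ} (i : Fin n) (w : Heis n) :
    ⁅heisF i, w⁆ = (-w.1 i) • (heisZ : Heis n) := by
  have hs : (∑ k, ((heisF i).1 k * w.2.1 k - w.1 k * (heisF i).2.1 k)) = -w.1 i := by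
    simp [heisF, Pi.single_apply]
  rw [heis_bracket, hs, heis_smul_heisZ]

lemma heis_bracket_e {n : ℕ} (i : Fin n) (w : Heis n) :
    ⁅w, heisE i⁆ = (-w.2.1 i) • (heisZ : Heis n) := by
  have hs : (∑ k, (w.1 k * (heisE i).2.1 k - (heisE i).1 k * w.2.1 k)) = -w.2.1 i := by
    simp [heisE, Pi.single_apply]
  rw [heis_bracket, hs, heis_smul_heisZ]

/-- The cosymplectic 1-form on `H_3`. -/
noncomputable def heisAlpha : Heis 1 →ₗ[ℝ] ℝ where
  toFun a := a.1 0
  map_add' _ _ := rfl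
  map_smul' _ _ := rfl

/-- The cosymplectic 2-form on `H_3`. -/
noncomputable def heisOmega : Heis 1 →ₗ[ℝ] Heis 1 →ₗ[ℝ] ℝ :=
  LinearMap.mk₂ ℝ (fun a b : Heis 1 => a.2.1 0 * b.2.2 - a.2.2 * b.2.1 0)
    (fun a b c => by
      show (a.2.1 0 + b.2.1 0) * c.2.2 - (a.2.2 + b.2.2) * c.2.1 0 = _; ring)
    (fun t a c => by
      show (t * a.2.1 0) * c.2.2 - (t * a.2.2) * c.2.1 0 = _
      simp only [smul_eq_mul]; ring)
    (fun a b c => by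
      show a.2.1 0 * (b.2.2 + c.2.2) - a.2.2 * (b.2.1 0 + c.2.1 0) = _; ring)
    (fun t a b => by
      show a.2.1 0 * (t * b.2.2) - a.2.2 * (t * b.2.1 0) = _
      simp only [smul_eq_mul]; ring)

lemma heisAlpha_apply (a : Heis 1) : heisAlpha a = a.1 0 := rfl

lemma heisOmega_apply (a b : Heis 1) :
    heisOmega a b = a.2.1 0 * b.2.2 - a.2.2 * b.2.1 0 := rfl

lemma heis1_decomp (w : Heis 1) :
    w = w.1 0 • heisE 0 + w.2.1 0 • heisF 0 + w.2.2 • heisZ := by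
  have h1all : ∀ g : Fin 1 → ℝ, (fun _ : Fin 1 => g 0) = g :=
    fun g => funext fun j => by rw [Subsingleton.elim j 0]
  refine Prod.ext ?_ (Prod.ext ?_ ?_)
  · show w.1 = w.1 0 • (Pi.single 0 1 : Fin 1 → ℝ) + w.2.1 0 • (0 : Fin 1 → ℝ) + w.2.2 • (0 : Fin 1 → ℝ)
    rw [← h1all w.1]
    funext j
    rw [Subsingleton.elim j 0]
    simp [Pi.single_apply]
  · show w.2.1 = w.1 0 • (0 : Fin 1 → ℝ) + w.2.1 0 • (Pi.single 0 1 : Fin 1 → ℝ) + w.2.2 • (0 : Fin 1 → ℝ)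
    rw [← h1all w.2.1]
    funext j
    rw [Subsingleton.elim j 0]
    simp [Pi.single_apply]
  · show w.2.2 = w.1 0 • (0:ℝ) + w.2.1 0 • (0:ℝ) + w.2.2 • (1:ℝ)
    simp

/-- The Heisenberg Lie algebra `H_{2n+1}` (with `n ≥ 1`) admits a
cosymplectic structure if and only if `n = 1`. -/
theorem heisenberg_cosymplectic_iff (n : ℕ) (hn : 1 ≤ n) :
    (∃ (α : Heis n →ₗ[ℝ] ℝ) (ω : Heis n →ₗ[ℝ] Heis n →ₗ[ℝ] ℝ),
        (∀ x y : Heis n, ω x y = - ω y x) ∧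
        (∀ x y : Heis n, α ⁅x, y⁆ = 0) ∧
        (∀ x y z : Heis n, ω ⁅x, y⁆ z + ω ⁅y, z⁆ x + ω ⁅z, x⁆ y = 0) ∧
        Function.Bijective (fun x : Heis n => ω x + α x • α)) ↔ n = 1 := by
  constructor
  · rintro ⟨α, ω, hskew, hcl, hco, hbij⟩
    by_contra hne
    have hn2 : 2 ≤ n := by omega
    set i0 : Fin n := ⟨0, by omega⟩ with hi0
    set i1 : Fin n := ⟨1, by omega⟩ with hi1
    have key : ∀ (i : Fin n) (w : Heis n),
        ω heisZ w = w.1 i * ω heisZ (heisE i) + w.2.1 i * ω heisZ (heisF i) := by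
      intro i w
      have h := hco (heisE i) (heisF i) w
      rw [heis_bracket_ef i, heis_bracket_f i w, heis_bracket_e i w,
        map_smul, map_smul] at h
      simp only [LinearMap.smul_apply, smul_eq_mul, neg_mul] at h
      linarith
    have h01 : i0 ≠ i1 := by
      intro h
      have := congrArg Fin.val h
      simp [hi0, hi1] at this
    have he0 : ω heisZ (heisE i0) = 0 := by
      have h := key i1 (heisE i0)
      simpa [heisE, Pi.single_apply, h01.symm] using h
    have hf0 : ω heisZ (heisF i0) = 0 := by
      have h := key i1 (heisF i0)
      simpa [heisF, Pi.single_apply, h01.symm] using h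
    have hz : ∀ w : Heis n, ω heisZ w = 0 := by
      intro w
      rw [key i0 w, he0, hf0]; ring
    have haz : α heisZ = 0 := by
      have h := hcl (heisE i0) (heisF i0)
      rwa [heis_bracket_ef i0] at h
    have hz0 : (heisZ : Heis n) = 0 := by
      apply hbij.1
      show ω heisZ + α heisZ • α = ω (0 : Heis n) + α (0 : Heis n) • α
      simp only [haz, map_zero, zero_smul, add_zero, zero_add]
      exact LinearMap.ext hz
    exact absurd (congrArg (fun p : Heis n => p.2.2) hz0) (by show ¬ (1:ℝ) = 0; norm_num [heisZ])
  · rintro rfl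
    refine ⟨heisAlpha, heisOmega, ?_, ?_, ?_, ?_⟩
    · intro x y
      rw [heisOmega_apply, heisOmega_apply]; ring
    · intro x y
      show (⁅x, y⁆ : Heis 1).1 0 = 0
      rfl
    · intro x y w
      simp only [heisOmega_apply, heis_bracket]
      show ((0 : Fin 1 → ℝ) 0 * w.2.2
          - (∑ i, (x.1 i * y.2.1 i - y.1 i * x.2.1 i)) * w.2.1 0)
        + ((0 : Fin 1 → ℝ) 0 * x.2.2
          - (∑ i, (y.1 i * w.2.1 i - w.1 i * y.2.1 i)) * x.2.1 0)
        + ((0 : Fin 1 → ℝ) 0 * y.2.2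
          - (∑ i, (w.1 i * x.2.1 i - x.1 i * w.2.1 i)) * y.2.1 0) = 0
      simp only [Fin.sum_univ_one, Pi.zero_apply]
      ring
    · rw [Function.bijective_iff_has_inverse]
      refine ⟨fun φ => ((fun _ => φ (heisE 0)), (fun _ => φ heisZ), -φ (heisF 0)),
        ?_, ?_⟩
      · intro x
        have hE : (heisOmega x + heisAlpha x • heisAlpha) (heisE 0) = x.1 0 := by
          rw [LinearMap.add_apply, LinearMap.smul_apply, heisOmega_apply, heisAlpha_apply,
            heisAlpha_apply, smul_eq_mul]
          simp [heisOmega_apply, heisAlpha_apply, heisE, Pi.single_apply]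
        have hF : (heisOmega x + heisAlpha x • heisAlpha) (heisF 0) = -x.2.2 := by
          rw [LinearMap.add_apply, LinearMap.smul_apply, heisOmega_apply, heisAlpha_apply,
            heisAlpha_apply, smul_eq_mul]
          simp [heisOmega_apply, heisAlpha_apply, heisF, Pi.single_apply]
        have hZ : (heisOmega x + heisAlpha x • heisAlpha) heisZ = x.2.1 0 := by
          rw [LinearMap.add_apply, LinearMap.smul_apply, heisOmega_apply, heisAlpha_apply,
            heisAlpha_apply, smul_eq_mul]
          simp [heisOmega_apply, heisAlpha_apply, heisZ]
        show ((fun _ : Fin 1 => (heisOmega x + heisAlpha x • heisAlpha) (heisE 0)),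
          (fun _ : Fin 1 => (heisOmega x + heisAlpha x • heisAlpha) heisZ),
          -(heisOmega x + heisAlpha x • heisAlpha) (heisF 0)) = x
        rw [hE, hF, hZ]
        refine Prod.ext ?_ (Prod.ext ?_ (by simp))
        · exact funext fun j => by rw [Subsingleton.elim j 0]
        · exact funext fun j => by rw [Subsingleton.elim j 0]
      · intro φ
        set S : Heis 1 := ((fun _ : Fin 1 => φ (heisE 0)), (fun _ : Fin 1 => φ heisZ),
          -φ (heisF 0)) with hS
        show heisOmega S + heisAlpha S • heisAlpha = φ
        ext w
        have hw := heis1_decomp w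
        have hrhs : φ w = w.1 0 * φ (heisE 0) + w.2.1 0 * φ (heisF 0)
            + w.2.2 * φ heisZ := by
          conv_lhs => rw [hw]
          simp [map_add, map_smul]
        rw [hrhs]
        simp only [LinearMap.add_apply, LinearMap.smul_apply, smul_eq_mul,
          heisOmega_apply, heisAlpha_apply]
        show (fun _ : Fin 1 => φ heisZ) 0 * w.2.2 - (-φ (heisF 0)) * w.2.1 0
          + (fun _ : Fin 1 => φ (heisE 0)) 0 * w.1 0 = _
        ring
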